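/- Suppose the action of γ on X is free, i.e., γ(x) ≠ x for every x ∈ X. Then there exists an open subset U ⊆ X such that X is the disjoint union of the sets U, γ(U), γ²(U), ..., γ^{l-1}(U); that is, U is an open fundamental domain for the action of the cyclic group generated by γ. -/

import Mathlib

/-- If `γ` is a homeomorphism of order dividing the prime `l` of a locally compact,
Hausdorff, totally disconnected, second countable space `X`, and the action of `γ` is
free (`γ x ≠ x` for all `x`), then there is an open fundamental domain `U`: the sets
`U, γ(U), γ²(U), …, γ^{l-1}(U)` are pairwise disjoint and cover `X`. -/
theorem exists_open_fundamental_domain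
    (l : ℕ) (hl : l.Prime)
    (X : Type*) [TopologicalSpace X] [LocallyCompactSpace X] [T2Space X]
    [TotallyDisconnectedSpace X] [SecondCountableTopology X]
    (γ : X ≃ₜ X) (hγl : ∀ x, (⇑γ)^[l] x = x)
    (hfree : ∀ x : X, γ x ≠ x) :
    ∃ U : Set X, IsOpen U ∧
      (⋃ i ∈ Finset.range l, (⇑γ)^[i] '' U) = Set.univ ∧
      ∀ i j : ℕ, i < l → j < l → i ≠ j →
        Disjoint ((⇑γ)^[i] '' U) ((⇑γ)^[j] '' U) := by
  classical
  have hl0 : 0 < l := hl.pos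
  have hiter : ∀ (a : ℕ) (x : X), (⇑γ)^[a] x = (⇑γ)^[a % l] x := by
    intro a x
    conv_lhs => rw [← Nat.mod_add_div a l]
    rw [Function.iterate_add_apply, Function.iterate_mul]
    congr 1
    exact Function.iterate_fixed (hγl x) _
  have hinj : ∀ i : ℕ, Function.Injective ((⇑γ)^[i]) := fun i =>
    Function.Injective.iterate γ.injective i
  have hne : ∀ (x : X) (d : ℕ), 0 < d → d < l → (⇑γ)^[d] x ≠ x := by
    intro x d hd0 hdl h
    have hpl : Function.IsPeriodicPt ⇑γ l x := hγl x
    have hpd : Function.IsPeriodicPt ⇑γ d x := h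
    rcases hl.eq_one_or_self_of_dvd _ hpl.minimalPeriod_dvd with hm | hm
    · have := Function.isPeriodicPt_minimalPeriod ⇑γ x
      rw [hm] at this
      exact hfree x (by simpa [Function.IsPeriodicPt, Function.IsFixedPt] using this)
    · have h2 := hpd.minimalPeriod_dvd
      rw [hm] at h2
      exact absurd (Nat.le_of_dvd hd0 h2) (not_le.2 hdl)
  have hcancel : ∀ (j : ℕ), j ≤ l → ∀ v : X, (⇑γ)^[l - j] ((⇑γ)^[j] v) = v := by
    intro j hj v
    rw [← Function.iterate_add_apply, Nat.sub_add_cancel hj]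
    exact hγl v
  have himg : ∀ (i : ℕ) (S : Set X), IsClopen S → IsClopen ((⇑γ)^[i] '' S) := by
    intro i
    induction i with
    | zero => intro S hS; simpa using hS
    | succ n ih =>
      intro S hS
      rw [Function.iterate_succ', Set.image_comp (f := ⇑γ), ← γ.preimage_symm]
      exact (ih S hS).preimage γ.symm.continuous
  -- each point has a clopen neighborhood with disjoint translates
  have hloc : ∀ x : X, ∃ V : Set X, IsClopen V ∧ x ∈ V ∧
      ∀ d : ℕ, 0 < d → d < l → Disjoint V ((⇑γ)^[d] '' V) := by
    intro x
    have key : ∀ d : ℕ, 0 < d → d < l →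
        ∃ O : Set X, IsOpen O ∧ x ∈ O ∧ Disjoint O ((⇑γ)^[d] '' O) := by
      intro d hd0 hdl
      obtain ⟨u, v, hu, hv, hxu, hxv, huv⟩ := t2_separation (hne x d hd0 hdl)
      refine ⟨v ∩ ((⇑γ)^[d]) ⁻¹' u, hv.inter ((hu.preimage (by
        exact γ.continuous.iterate d))), ⟨hxv, by simpa using hxu⟩, ?_⟩
      refine Set.disjoint_left.2 ?_
      rintro z ⟨hzv, -⟩ ⟨w, ⟨-, hwu⟩, rfl⟩
      exact Set.disjoint_left.1 huv.symm hzv hwu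
    choose O hOopen hOx hOdisj using fun d (h : 0 < d ∧ d < l) => key d h.1 h.2
    let O' : ℕ → Set X := fun d => if h : 0 < d ∧ d < l then O d h else Set.univ
    have hO'open : ∀ d, IsOpen (O' d) := by
      intro d; by_cases h : 0 < d ∧ d < l <;> simp [O', h, hOopen]
    have hO'x : ∀ d, x ∈ O' d := by
      intro d; by_cases h : 0 < d ∧ d < l <;> simp [O', h, hOx]
    have hbig : IsOpen (⋂ d ∈ Finset.range l, O' d) :=
      isOpen_biInter_finset fun d _ => hO'open d
    have hxbig : x ∈ ⋂ d ∈ Finset.range l, O' d := by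
      simp only [Set.mem_iInter]; exact fun d _ => hO'x d
    obtain ⟨V, hV, hxV, hVsub⟩ :=
      (loc_compact_Haus_tot_disc_of_zero_dim (H := X)).mem_nhds_iff.1
        (hbig.mem_nhds hxbig)
    refine ⟨V, hV, hxV, fun d hd0 hdl => ?_⟩
    have hVO : V ⊆ O' d := fun y hy => by
      have := hVsub hy
      simp only [Set.mem_iInter] at this
      exact this d (Finset.mem_range.2 hdl)
    have hO'd : O' d = O d ⟨hd0, hdl⟩ := by simp [O', hd0, hdl]
    refine (hOdisj d ⟨hd0, hdl⟩).mono ?_ ?_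
    · rw [← hO'd]; exact hVO
    · rw [← hO'd]; exact Set.image_mono hVO
  rcases isEmpty_or_nonempty X with hX | hX
  · refine ⟨∅, isOpen_empty, ?_, ?_⟩
    · ext x; exact (hX.false x).elim
    · intro i j _ _ _; simp
  -- countable cover
  obtain ⟨s, hsc, hscover⟩ := TopologicalSpace.countable_cover_nhds
    (f := fun x => (hloc x).choose)
    (fun x => ((hloc x).choose_spec.1.2).mem_nhds (hloc x).choose_spec.2.1)
  have hsne : s.Nonempty := by
    rcases Set.eq_empty_or_nonempty s with h | h
    · exfalso
      rw [h] at hscover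
      simp only [Set.mem_empty_iff_false, Set.iUnion_of_empty, Set.iUnion_empty] at hscover
      exact Set.empty_ne_univ hscover
    · exact h
  obtain ⟨g, hg⟩ := hsc.exists_eq_range hsne
  set W : ℕ → Set X := fun n => (hloc (g n)).choose with hWdef
  have hWclopen : ∀ n, IsClopen (W n) := fun n => (hloc (g n)).choose_spec.1
  have hWdisj : ∀ n d, 0 < d → d < l → Disjoint (W n) ((⇑γ)^[d] '' W n) :=
    fun n d h1 h2 => (hloc (g n)).choose_spec.2.2 d h1 h2
  have hWcover : (⋃ n, W n) = Set.univ := by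
    rw [← hscover, hg]
    exact (Set.biUnion_range (f := g) (g := fun x => (hloc x).choose)).symm
  -- the fundamental domain
  set T : ℕ → Set X := fun n =>
    ⋃ m ∈ Finset.range n, ⋃ i ∈ Finset.range l, (⇑γ)^[i] '' W m with hTdef
  have hTclopen : ∀ n, IsClopen (T n) := by
    intro n
    refine isClopen_biUnion_finset fun m _ => isClopen_biUnion_finset fun i _ => ?_
    exact himg i (W m) (hWclopen m)
  set U : Set X := ⋃ n, (W n \ T n) with hUdef
  have hUopen : IsOpen U :=
    isOpen_iUnion fun n => (hWclopen n).2.sdiff (hTclopen n).1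
  -- membership in T
  have hmemT : ∀ (m n i : ℕ) (y : X), m < n → i < l → y ∈ (⇑γ)^[i] '' W m → y ∈ T n := by
    intro m n i y hmn hil hy
    exact Set.mem_biUnion (Finset.mem_range.2 hmn)
      (Set.mem_biUnion (Finset.mem_range.2 hil) hy)
  refine ⟨U, hUopen, ?_, ?_⟩
  · -- cover
    refine Set.eq_univ_of_forall fun x => ?_
    have hex : ∃ n, ∃ i < l, x ∈ (⇑γ)^[i] '' W n := by
      have : x ∈ ⋃ n, W n := hWcover ▸ Set.mem_univ x
      rcases Set.mem_iUnion.1 this with ⟨n, hn⟩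
      exact ⟨n, 0, hl0, by simpa using hn⟩
    let N := Nat.find hex
    obtain ⟨i, hil, y, hyW, hyx⟩ := Nat.find_spec hex
    have hyT : y ∉ T N := by
      intro hy
      simp only [hTdef, Set.mem_iUnion, Finset.mem_range] at hy
      obtain ⟨m, hmN, k, hkl, w, hwW, hwy⟩ := hy
      have hx : x ∈ (⇑γ)^[(i + k) % l] '' W m := by
        refine ⟨w, hwW, ?_⟩
        rw [← hiter, Function.iterate_add_apply, hwy, hyx]
      exact Nat.find_min hex hmN ⟨(i + k) % l, Nat.mod_lt _ hl0, hx⟩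
    refine Set.mem_biUnion (Finset.mem_range.2 hil) ⟨y, ?_, hyx⟩
    exact Set.mem_iUnion.2 ⟨N, hyW, hyT⟩
  · -- disjointness
    intro i j hil hjl hij
    rw [Set.disjoint_left]
    rintro z ⟨u, hu, rfl⟩ ⟨v, hv, hvz⟩
    rw [hUdef, Set.mem_iUnion] at hu hv
    obtain ⟨n, hun, hunT⟩ := hu
    obtain ⟨m, hvm, hvmT⟩ := hv
    -- relation: γ^[i] u = γ^[j] v
    have hrel : (⇑γ)^[i] u = (⇑γ)^[j] v := hvz.symm
    rcases lt_trichotomy n m with hnm | hnm | hnm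
    · -- v ∈ T m, contradiction
      apply hvmT
      have hv' : v = (⇑γ)^[(l - j + i) % l] u := by
        have : (⇑γ)^[l - j] ((⇑γ)^[j] v) = v := hcancel j hjl.le v
        rw [← this, ← hrel, ← Function.iterate_add_apply, hiter]
      exact hmemT n m _ v hnm (Nat.mod_lt _ hl0) ⟨u, hun, hv'.symm⟩
    · -- n = m: use disjointness of W n
      subst hnm
      rcases Nat.lt_or_ge i j with hlt | hge
      · have hu' : u = (⇑γ)^[j - i] v := by
        -- γ^[i] u = γ^[j] v = γ^[i] (γ^[j-i] v)
          apply hinj i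
          rw [hrel, ← Function.iterate_add_apply]
          congr 1
          omega
        exact Set.disjoint_left.1 (hWdisj n (j - i) (by omega) (by omega)) hun
          ⟨v, hvm, hu'.symm⟩
      · have hlt' : j < i := by omega
        have hv' : v = (⇑γ)^[i - j] u := by
          apply hinj j
          rw [← hrel, ← Function.iterate_add_apply]
          congr 1
          omega
        exact Set.disjoint_left.1 (hWdisj n (i - j) (by omega) (by omega)) hvm
          ⟨u, hun, hv'.symm⟩
    · -- m < n : u ∈ T n, contradiction
      apply hunT
      have hu' : u = (⇑γ)^[(l - i + j) % l] v := by
        have : (⇑γ)^[l - i] ((⇑γ)^[i] u) = u := hcancel i hil.le u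
        rw [← this, hrel, ← Function.iterate_add_apply, hiter]
      exact hmemT m n _ u hnm (Nat.mod_lt _ hl0) ⟨v, hvm, hu'.symm⟩
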